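/- Let U ⊆ ℂ be open, let F, G : U → ℂ be holomorphic with G nowhere zero, and define x(u+iv) = (Re h₁, Im h₁, Re h₃) where h₁' = F and h₃' = −F/G (Weierstrass data φ = (F, −iF, −F/G)). Then at every z₀ ∈ U with F(z₀) ≠ 0, the minimal normal N_m = (n₁,n₂,1) satisfies n₁ + i n₂ = 1/conj(G(z₀)), the parabolic normal is ξ = (G/|G|² , ½ − 1/(2|G|²)) (first two components identified with a complex number), and the parabolic stereographic projection of ξ equals G(z₀): (ξ₁ + iξ₂)/(ξ₁² + ξ₂²) = G(z₀). -/

import Mathlib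

noncomputable section

/-- Partial derivative of a map on ℂ ≅ ℝ² in the u-direction (real direction 1). -/
def du {E : Type*} [NormedAddCommGroup E] [NormedSpace ℝ E]
    (f : ℂ → E) : ℂ → E := fun z => fderiv ℝ f z 1

/-- Partial derivative of a map on ℂ ≅ ℝ² in the v-direction (direction i). -/
def dv {E : Type*} [NormedAddCommGroup E] [NormedSpace ℝ E]
    (f : ℂ → E) : ℂ → E := fun z => fderiv ℝ f z Complex.I

/-- The degenerate simply isotropic inner product on ℝ³: ⟨u,v⟩ = u₁v₁ + u₂v₂. -/
def isoInner (a b : ℝ × ℝ × ℝ) : ℝ := a.1 * b.1 + a.2.1 * b.2.1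

/-- The Euclidean dot product on ℝ³. -/
def dot3 (a b : ℝ × ℝ × ℝ) : ℝ := a.1 * b.1 + a.2.1 * b.2.1 + a.2.2 * b.2.2

/-- The Euclidean cross product on ℝ³. -/
def cross3 (a b : ℝ × ℝ × ℝ) : ℝ × ℝ × ℝ :=
  (a.2.1 * b.2.2 - a.2.2 * b.2.1, a.2.2 * b.1 - a.1 * b.2.2, a.1 * b.2.1 - a.2.1 * b.1)

/-- First fundamental form coefficients (isotropic metric) of x : ℂ → ℝ³. -/
def g11 (x : ℂ → ℝ × ℝ × ℝ) (z : ℂ) : ℝ := isoInner (du x z) (du x z)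
def g12 (x : ℂ → ℝ × ℝ × ℝ) (z : ℂ) : ℝ := isoInner (du x z) (dv x z)
def g22 (x : ℂ → ℝ × ℝ × ℝ) (z : ℂ) : ℝ := isoInner (dv x z) (dv x z)

/-- The minimal normal: the unique vector of the form (n₁,n₂,1) Euclidean-orthogonal to
x_u and x_v (obtained by normalizing the cross product so its third component is 1). -/
def Nm (x : ℂ → ℝ × ℝ × ℝ) (z : ℂ) : ℝ × ℝ × ℝ :=
  ((cross3 (du x z) (dv x z)).1 / (cross3 (du x z) (dv x z)).2.2,
   (cross3 (du x z) (dv x z)).2.1 / (cross3 (du x z) (dv x z)).2.2, 1)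

/-- Second fundamental form coefficients with respect to the minimal normal. -/
def h11 (x : ℂ → ℝ × ℝ × ℝ) (z : ℂ) : ℝ := dot3 (du (du x) z) (Nm x z)
def h12 (x : ℂ → ℝ × ℝ × ℝ) (z : ℂ) : ℝ := dot3 (du (dv x) z) (Nm x z)
def h22 (x : ℂ → ℝ × ℝ × ℝ) (z : ℂ) : ℝ := dot3 (dv (dv x) z) (Nm x z)

/-- The isotropic Gaussian curvature. -/
def Kcurv (x : ℂ → ℝ × ℝ × ℝ) (z : ℂ) : ℝ :=
  (h11 x z * h22 x z - (h12 x z) ^ 2) / (g11 x z * g22 x z - (g12 x z) ^ 2)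

/-- The isotropic mean curvature. -/
def meanH (x : ℂ → ℝ × ℝ × ℝ) (z : ℂ) : ℝ :=
  (g11 x z * h22 x z - 2 * g12 x z * h12 x z + g22 x z * h11 x z) /
    (2 * (g11 x z * g22 x z - (g12 x z) ^ 2))

/-- The parabolic normal ξ = (n₁, n₂, ½(1 − (n₁² + n₂²))) built from the minimal normal
N_m = (n₁,n₂,1). -/
def xiN (x : ℂ → ℝ × ℝ × ℝ) (z : ℂ) : ℝ × ℝ × ℝ :=
  ((Nm x z).1, (Nm x z).2.1, (1 - ((Nm x z).1 ^ 2 + (Nm x z).2.1 ^ 2)) / 2)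

/-- For the Weierstrass data φ = (F, −iF, −F/G) (i.e. x = (Re h₁, Im h₁, Re h₃) with
h₁' = F, h₃' = −F/G and G nowhere zero), at every z₀ with F(z₀) ≠ 0 the minimal normal
satisfies n₁ + i n₂ = 1/conj(G(z₀)), the parabolic normal is
ξ = (G/|G|², ½ − 1/(2|G|²)), and the parabolic stereographic projection of ξ equals
G(z₀). -/
theorem stmt14 (U : Set ℂ) (hU : IsOpen U) (F G h₁ h₃ : ℂ → ℂ)
    (hF : DifferentiableOn ℂ F U) (hG : DifferentiableOn ℂ G U)
    (hGne : ∀ z ∈ U, G z ≠ 0)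
    (hh₁ : ∀ z ∈ U, HasDerivAt h₁ (F z) z)
    (hh₃ : ∀ z ∈ U, HasDerivAt h₃ (-(F z / G z)) z) :
    ∀ z₀ ∈ U, F z₀ ≠ 0 →
      ((Nm (fun w => ((h₁ w).re, (h₁ w).im, (h₃ w).re)) z₀).1 : ℂ) +
          ((Nm (fun w => ((h₁ w).re, (h₁ w).im, (h₃ w).re)) z₀).2.1 : ℂ) * Complex.I =
        1 / (starRingEnd ℂ) (G z₀) ∧
      ((xiN (fun w => ((h₁ w).re, (h₁ w).im, (h₃ w).re)) z₀).1 : ℂ) +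
          ((xiN (fun w => ((h₁ w).re, (h₁ w).im, (h₃ w).re)) z₀).2.1 : ℂ) * Complex.I =
        G z₀ / (‖G z₀‖ ^ 2 : ℝ) ∧
      (xiN (fun w => ((h₁ w).re, (h₁ w).im, (h₃ w).re)) z₀).2.2 =
        1 / 2 - 1 / (2 * ‖G z₀‖ ^ 2) ∧
      (((xiN (fun w => ((h₁ w).re, (h₁ w).im, (h₃ w).re)) z₀).1 : ℂ) +
          ((xiN (fun w => ((h₁ w).re, (h₁ w).im, (h₃ w).re)) z₀).2.1 : ℂ) * Complex.I) /
        (((xiN (fun w => ((h₁ w).re, (h₁ w).im, (h₃ w).re)) z₀).1 ^ 2 +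
          (xiN (fun w => ((h₁ w).re, (h₁ w).im, (h₃ w).re)) z₀).2.1 ^ 2 : ℝ) : ℂ) =
        G z₀ := by
  intro z₀ hz₀ hFz
  open Complex ComplexConjugate in
  set g := G z₀ with hgdef
  set P := F z₀ with hPdef
  have hg : g ≠ 0 := hGne z₀ hz₀
  have hP : P ≠ 0 := hFz
  -- derivative of the immersion
  have hL1 := ((hh₁ z₀ hz₀).hasFDerivAt).restrictScalars ℝ
  have hL3 := ((hh₃ z₀ hz₀).hasFDerivAt).restrictScalars ℝ
  have hre1 := (Complex.reCLM.hasFDerivAt (x := h₁ z₀)).comp z₀ hL1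
  have him1 := (Complex.imCLM.hasFDerivAt (x := h₁ z₀)).comp z₀ hL1
  have hre3 := (Complex.reCLM.hasFDerivAt (x := h₃ z₀)).comp z₀ hL3
  have hx : HasFDerivAt (fun w => ((h₁ w).re, (h₁ w).im, (h₃ w).re)) _ z₀ :=
    hre1.prodMk (him1.prodMk hre3)
  set Q := -(P / g) with hQdef
  have hdu : du (fun w => ((h₁ w).re, (h₁ w).im, (h₃ w).re)) z₀ = (P.re, P.im, Q.re) := by
    simp only [du, hx.fderiv]; simp [smul_eq_mul]; exact ⟨rfl, rfl⟩
  have hdv : dv (fun w => ((h₁ w).re, (h₁ w).im, (h₃ w).re)) z₀ = (-P.im, P.re, -Q.im) := by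
    simp only [dv, hx.fderiv]; simp [smul_eq_mul]; exact ⟨rfl, rfl⟩
  set c₁ := P.im * (-Q.im) - Q.re * P.re with hc₁
  set c₂ := Q.re * (-P.im) - P.re * (-Q.im) with hc₂
  set c₃ := P.re * P.re + P.im * P.im with hc₃def
  have hc₃ : (c₃ : ℂ) = P * conj P := by
    rw [Complex.mul_conj, hc₃def, Complex.normSq_apply]
  have hc₃ne : c₃ ≠ 0 := by
    have := Complex.normSq_pos.2 hP
    simpa [hc₃def, Complex.normSq_apply] using this.ne'
  have hNm : Nm (fun w => ((h₁ w).re, (h₁ w).im, (h₃ w).re)) z₀ =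
      (c₁ / c₃, c₂ / c₃, 1) := by
    simp [Nm, hdu, hdv, cross3, hc₁, hc₂, hc₃def]
  have key : (c₁ : ℂ) + (c₂ : ℂ) * I = -(P * conj Q) := by
    apply Complex.ext <;> simp [hc₁, hc₂] <;> ring
  have hconjQ : conj Q = -(conj P / conj g) := by
    simp [hQdef, map_div₀]
  have hgconj : conj g ≠ 0 := by simpa using hg
  have hPconj : conj P ≠ 0 := by simpa using hP
  have hc₃C : (c₃ : ℂ) ≠ 0 := (Complex.ofReal_ne_zero).2 hc₃ne
  have main : ((c₁ / c₃ : ℝ) : ℂ) + ((c₂ / c₃ : ℝ) : ℂ) * I = 1 / conj g := by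
    push_cast
    rw [show (↑c₁/↑c₃ + ↑c₂/↑c₃*I : ℂ) = ((↑c₁+↑c₂*I)/↑c₃ : ℂ) by ring, key, hconjQ, hc₃]
    field_simp
  have habs : ‖g‖ ^ 2 ≠ 0 := pow_ne_zero 2 (norm_ne_zero_iff.2 hg)
  have hsum : (c₁/c₃)^2 + (c₂/c₃)^2 = 1 / ‖g‖ ^ 2 := by
    have h2 := congrArg Complex.normSq main
    rw [Complex.normSq_add_mul_I] at h2
    rw [h2]
    simp [Complex.normSq_div, Complex.normSq_conj, Complex.sq_norm]
  have goal2 : ((c₁ / c₃ : ℝ) : ℂ) + ((c₂ / c₃ : ℝ) : ℂ) * I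
      = g / ((‖g‖ ^ 2 : ℝ) : ℂ) := by
    rw [main]
    rw [show ((‖g‖ ^ 2 : ℝ) : ℂ) = g * conj g by
      rw [Complex.mul_conj]; norm_cast; exact Complex.sq_norm g]
    field_simp
  have goal3 : (1 - ((c₁/c₃)^2 + (c₂/c₃)^2)) / 2 = 1/2 - 1/(2 * ‖g‖ ^ 2) := by
    rw [hsum, sub_div, div_div, mul_comm]
  have goal4 : (((c₁ / c₃ : ℝ) : ℂ) + ((c₂ / c₃ : ℝ) : ℂ) * I)
      / (((c₁/c₃)^2 + (c₂/c₃)^2 : ℝ) : ℂ) = g := by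
    rw [main, hsum]
    push_cast
    rw [show ((‖g‖ : ℝ)^2 : ℂ) = g * conj g by
      norm_cast; rw [Complex.mul_conj]; norm_cast; exact Complex.sq_norm g]
    field_simp
  simp only [xiN, hNm]
  exact ⟨main, goal2, goal3, goal4⟩
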